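/- In the reduction from two-counter machines to session type equality: if machine M starting from configuration (1, i, j) halts, then T₁[i,j] ≢ T₁'[i,j]; that is, no type bisimulation can relate T₁[i,j] and T₁'[i,j]. -/
import Mathlib


/-- Instructions of a two-counter (Minsky) machine. Instruction indices are 1-based. -/
inductive Instr : Type where
  | inc1 (k : ℕ)        -- increment counter 1; goto k
  | inc2 (k : ℕ)        -- increment counter 2; goto k
  | zdec1 (k l : ℕ)     -- if c₁ = 0 goto k else dec c₁; goto l
  | zdec2 (k l : ℕ)     -- if c₂ = 0 goto k else dec c₂; goto l
  | halt
deriving DecidableEq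

/-- A configuration (i, c₁, c₂): instruction pointer and counter values. -/
abbrev Config := ℕ × ℕ × ℕ

/-- The successor relation C ↦ C' of a two-counter machine M = ι₁,…,ι_m. -/
def Succ (M : List Instr) (C C' : Config) : Prop :=
  match M[C.1 - 1]? with
  | some (.inc1 k) => C' = (k, C.2.1 + 1, C.2.2)
  | some (.inc2 k) => C' = (k, C.2.1, C.2.2 + 1)
  | some (.zdec1 k l) =>
      if C.2.1 = 0 then C' = (k, C.2.1, C.2.2) else C' = (l, C.2.1 - 1, C.2.2)
  | some (.zdec2 k l) =>
      if C.2.2 = 0 then C' = (k, C.2.1, C.2.2) else C' = (l, C.2.1, C.2.2 - 1)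
  | some .halt => False
  | none => False

/-- Closed arithmetically refined session types: internal/external choice over
finite label sets (labels are naturals), tensor, lolli, unit, assertions ?{φ}A,
assumptions !{φ}A, existential and universal quantification over naturals
(represented as families of types), and indexed type variables V[ē] with a
list of (closed) natural-number indices. -/
inductive RTy : Type 1 where
  | ichoice (L : Finset ℕ) (f : ℕ → RTy)
  | echoice (L : Finset ℕ) (f : ℕ → RTy)
  | tensor (A B : RTy)
  | lolli (A B : RTy)
  | one
  | assrt (φ : Prop) (A : RTy)   -- ?{φ}. A
  | assum (φ : Prop) (A : RTy)   -- !{φ}. A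
  | exi (f : ℕ → RTy)            -- ∃n. A
  | all (f : ℕ → RTy)            -- ∀n. A
  | var (v : ℕ) (es : List ℕ)    -- V[ē]

/-- A signature assigns to each indexed type variable and each list of indices
the (instantiated) defining type. -/
abbrev Sig := ℕ → List ℕ → RTy

/-- One-step unfolding of indexed type definitions. -/
def unfoldT (Sg : Sig) : RTy → RTy
  | .var v es => Sg v es
  | A => A

/-- One step of the bisimulation game on closed refined session types. -/
def RStep (R : RTy → RTy → Prop) : RTy → RTy → Prop
  | .ichoice L f, .ichoice L' g => L = L' ∧ ∀ ℓ ∈ L, R (f ℓ) (g ℓ)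
  | .echoice L f, .echoice L' g => L = L' ∧ ∀ ℓ ∈ L, R (f ℓ) (g ℓ)
  | .tensor A₁ A₂, .tensor B₁ B₂ => R A₁ B₁ ∧ R A₂ B₂
  | .lolli A₁ A₂, .lolli B₁ B₂ => R A₁ B₁ ∧ R A₂ B₂
  | .one, .one => True
  | .assrt φ A, .assrt ψ B => (φ ∧ ψ ∧ R A B) ∨ (¬φ ∧ ¬ψ)
  | .assum φ A, .assum ψ B => (φ ∧ ψ ∧ R A B) ∨ (¬φ ∧ ¬ψ)
  | .exi f, .exi g => ∀ i : ℕ, R (f i) (g i)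
  | .all f, .all g => ∀ i : ℕ, R (f i) (g i)
  | _, _ => False

/-- `R` is a type bisimulation on closed refined session types. -/
def IsBisim (Sg : Sig) (R : RTy → RTy → Prop) : Prop :=
  ∀ A B, R A B → RStep R (unfoldT Sg A) (unfoldT Sg B)

/-- Type equality A ≡ B: some type bisimulation relates A and B. -/
def REq (Sg : Sig) (A B : RTy) : Prop :=
  ∃ R, IsBisim Sg R ∧ R A B

/-! The reduction from two-counter machines to type equality.  For a machine
M = ι₁,…,ι_m we define a signature in which type variable `2*p` is T_p[c₁,c₂]
and `2*p+1` is T_p'[c₁,c₂] (indices `es = [c₁,c₂]`).  Labels: ℓ = 0, ℓ' = 1,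
inc₁ = 2, inc₂ = 3, zero₁ = 4, dec₁ = 5, zero₂ = 6, dec₂ = 7.  At a halt
instruction (or an out-of-range instruction pointer, where the computation
also ends) the unprimed type loops as T_inf = ⊕{ℓ : T_inf} and the primed
type as T_inf' = ⊕{ℓ' : T_inf'} with ℓ ≠ ℓ'; all other instructions are
translated identically on both sides using only internal choice and
assertions ?{c = 0}, ?{c > 0}. -/
def SgM (M : List Instr) : Sig := fun v es =>
  let c₁ := es.getD 0 0
  let c₂ := es.getD 1 0
  match M[v / 2 - 1]? with
  | some (.inc1 k) => .ichoice {2} (fun _ => .var (2 * k + v % 2) [c₁ + 1, c₂])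
  | some (.inc2 k) => .ichoice {3} (fun _ => .var (2 * k + v % 2) [c₁, c₂ + 1])
  | some (.zdec1 k l) => .ichoice {4, 5} (fun ℓ =>
      if ℓ = 4 then .assrt (c₁ = 0) (.var (2 * k + v % 2) [c₁, c₂])
      else .assrt (c₁ > 0) (.var (2 * l + v % 2) [c₁ - 1, c₂]))
  | some (.zdec2 k l) => .ichoice {6, 7} (fun ℓ =>
      if ℓ = 6 then .assrt (c₂ = 0) (.var (2 * k + v % 2) [c₁, c₂])
      else .assrt (c₂ > 0) (.var (2 * l + v % 2) [c₁, c₂ - 1]))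
  | _ => .ichoice {v % 2} (fun _ => .var v es)

/-- T₁[i,j]: the type encoding the machine started at configuration (1,i,j). -/
def T₁ (i j : ℕ) : RTy := .var 2 [i, j]

/-- T₁'[i,j]: its primed variant. -/
def T₁' (i j : ℕ) : RTy := .var 3 [i, j]

/-- The computation of M from (1, i, j) is finite. -/
def Halts (M : List Instr) (i j : ℕ) : Prop :=
  ∃ C : Config, Relation.ReflTransGen (Succ M) (1, i, j) C ∧ ∀ C', ¬ Succ M C C'

lemma sg_unfold (M : List Instr) (p c₁ c₂ : ℕ) :
    unfoldT (SgM M) (.var (2 * p) [c₁, c₂]) =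
      (match M[p - 1]? with
      | some (.inc1 k) => .ichoice {2} (fun _ => .var (2 * k) [c₁ + 1, c₂])
      | some (.inc2 k) => .ichoice {3} (fun _ => .var (2 * k) [c₁, c₂ + 1])
      | some (.zdec1 k l) => .ichoice {4, 5} (fun ℓ =>
          if ℓ = 4 then .assrt (c₁ = 0) (.var (2 * k) [c₁, c₂])
          else .assrt (c₁ > 0) (.var (2 * l) [c₁ - 1, c₂]))
      | some (.zdec2 k l) => .ichoice {6, 7} (fun ℓ =>
          if ℓ = 6 then .assrt (c₂ = 0) (.var (2 * k) [c₁, c₂])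
          else .assrt (c₂ > 0) (.var (2 * l) [c₁, c₂ - 1]))
      | _ => .ichoice {0} (fun _ => .var (2 * p) [c₁, c₂]) : RTy) := by
  have e1 : 2 * p / 2 = p := by omega
  have e3 : 2 * p % 2 = 0 := by omega
  simp only [unfoldT, SgM, e1, e3, List.getD]
  rcases M[p-1]? with _ | i
  · rfl
  · cases i <;> simp

lemma sg_unfold' (M : List Instr) (p c₁ c₂ : ℕ) :
    unfoldT (SgM M) (.var (2 * p + 1) [c₁, c₂]) =
      (match M[p - 1]? with
      | some (.inc1 k) => .ichoice {2} (fun _ => .var (2 * k + 1) [c₁ + 1, c₂])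
      | some (.inc2 k) => .ichoice {3} (fun _ => .var (2 * k + 1) [c₁, c₂ + 1])
      | some (.zdec1 k l) => .ichoice {4, 5} (fun ℓ =>
          if ℓ = 4 then .assrt (c₁ = 0) (.var (2 * k + 1) [c₁, c₂])
          else .assrt (c₁ > 0) (.var (2 * l + 1) [c₁ - 1, c₂]))
      | some (.zdec2 k l) => .ichoice {6, 7} (fun ℓ =>
          if ℓ = 6 then .assrt (c₂ = 0) (.var (2 * k + 1) [c₁, c₂])
          else .assrt (c₂ > 0) (.var (2 * l + 1) [c₁, c₂ - 1]))
      | _ => .ichoice {1} (fun _ => .var (2 * p + 1) [c₁, c₂]) : RTy) := by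
  have e1 : (2 * p + 1) / 2 = p := by omega
  have e3 : (2 * p + 1) % 2 = 1 := by omega
  simp only [unfoldT, SgM, e1, e3, List.getD]
  rcases M[p-1]? with _ | i
  · rfl
  · cases i <;> simp

lemma step_lemma (M : List Instr) (R : RTy → RTy → Prop) (hR : IsBisim (SgM M) R)
    {C C' : Config} (hS : Succ M C C')
    (hP : R (.var (2 * C.1) [C.2.1, C.2.2]) (.var (2 * C.1 + 1) [C.2.1, C.2.2])) :
    R (.var (2 * C'.1) [C'.2.1, C'.2.2]) (.var (2 * C'.1 + 1) [C'.2.1, C'.2.2]) := by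
  obtain ⟨p, c₁, c₂⟩ := C
  have h := hR _ _ hP
  rw [sg_unfold, sg_unfold'] at h
  unfold Succ at hS
  simp only at hS h
  rcases hM : M[p-1]? with _ | instr
  · rw [hM] at hS; exact absurd hS (by simp)
  · rw [hM] at hS h
    cases instr with
    | inc1 k =>
      simp only [RStep] at h
      have := h.2 2 (by simp)
      rw [hS]; exact this
    | inc2 k =>
      simp only [RStep] at h
      have := h.2 3 (by simp)
      rw [hS]; exact this
    | zdec1 k l =>
      simp only [RStep] at h
      by_cases hc : c₁ = 0
      · have h4 := h.2 4 (by simp)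
        simp only [if_pos rfl] at h4
        have h4' := hR _ _ h4
        simp only [unfoldT, RStep] at h4'
        rcases h4' with ⟨_, _, hr⟩ | ⟨hn, _⟩
        · have hS' : C' = (k, c₁, c₂) := by simpa [hc] using hS
          rw [hS']; exact hr
        · exact absurd hc hn
      · have h5 := h.2 5 (by simp)
        simp only [if_neg (by norm_num : (5:ℕ) ≠ 4)] at h5
        have h5' := hR _ _ h5
        simp only [unfoldT, RStep] at h5'
        rcases h5' with ⟨_, _, hr⟩ | ⟨hn, _⟩
        · have hS' : C' = (l, c₁ - 1, c₂) := by simpa [hc] using hS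
          rw [hS']; exact hr
        · exact absurd (Nat.pos_of_ne_zero hc) hn
    | zdec2 k l =>
      simp only [RStep] at h
      by_cases hc : c₂ = 0
      · have h4 := h.2 6 (by simp)
        simp only [if_pos rfl] at h4
        have h4' := hR _ _ h4
        simp only [unfoldT, RStep] at h4'
        rcases h4' with ⟨_, _, hr⟩ | ⟨hn, _⟩
        · have hS' : C' = (k, c₁, c₂) := by simpa [hc] using hS
          rw [hS']; exact hr
        · exact absurd hc hn
      · have h5 := h.2 7 (by simp)
        simp only [if_neg (by norm_num : (7:ℕ) ≠ 6)] at h5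
        have h5' := hR _ _ h5
        simp only [unfoldT, RStep] at h5'
        rcases h5' with ⟨_, _, hr⟩ | ⟨hn, _⟩
        · have hS' : C' = (l, c₁, c₂ - 1) := by simpa [hc] using hS
          rw [hS']; exact hr
        · exact absurd (Nat.pos_of_ne_zero hc) hn
    | halt => exact absurd hS (by simp)

lemma terminal_lemma (M : List Instr) (R : RTy → RTy → Prop) (hR : IsBisim (SgM M) R)
    {C : Config} (hT : ∀ C', ¬ Succ M C C')
    (hP : R (.var (2 * C.1) [C.2.1, C.2.2]) (.var (2 * C.1 + 1) [C.2.1, C.2.2])) : False := by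
  obtain ⟨p, c₁, c₂⟩ := C
  have h := hR _ _ hP
  rw [sg_unfold, sg_unfold'] at h
  rcases hM : M[p-1]? with _ | instr
  · rw [hM] at h
    simp only [RStep] at h
    have := h.1
    have h0 : (0 : ℕ) ∈ ({0} : Finset ℕ) := by simp
    rw [this] at h0
    simp at h0
  · cases instr with
    | inc1 k =>
      exact hT (k, c₁ + 1, c₂) (by unfold Succ; simp [hM])
    | inc2 k =>
      exact hT (k, c₁, c₂ + 1) (by unfold Succ; simp [hM])
    | zdec1 k l =>
      by_cases hc : c₁ = 0
      · exact hT (k, c₁, c₂) (by unfold Succ; simp [hM, hc])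
      · exact hT (l, c₁ - 1, c₂) (by unfold Succ; simp [hM, hc])
    | zdec2 k l =>
      by_cases hc : c₂ = 0
      · exact hT (k, c₁, c₂) (by unfold Succ; simp [hM, hc])
      · exact hT (l, c₁, c₂ - 1) (by unfold Succ; simp [hM, hc])
    | halt =>
      rw [hM] at h
      simp only [RStep] at h
      have := h.1
      have h0 : (0 : ℕ) ∈ ({0} : Finset ℕ) := by simp
      rw [this] at h0
      simp at h0

/-- if machine M starting from (1, i, j) halts, then
T₁[i,j] ≢ T₁'[i,j]: no type bisimulation can relate them. -/
theorem halting_implies_type_unequal (M : List Instr) (i j : ℕ)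
    (h : Halts M i j) : ¬ REq (SgM M) (T₁ i j) (T₁' i j) := by
  rintro ⟨R, hR, hstart⟩
  obtain ⟨C, hpath, hterm⟩ := h
  have hinv : R (.var (2 * C.1) [C.2.1, C.2.2]) (.var (2 * C.1 + 1) [C.2.1, C.2.2]) := by
    clear hterm
    induction hpath with
    | refl => simpa [T₁, T₁'] using hstart
    | tail _ hstep ih => exact step_lemma M R hR hstep ih
  exact terminal_lemma M R hR hterm hinv
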